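/- Let S and A be nonempty finite sets and let 𝒫 ⊆ Δ(S)^{S×A} be a convex and compact uncertainty set. Then 𝒫 satisfies the simultaneous solvability property (SSP) if and only if 𝒫 is s-rectangular, i.e. 𝒫 equals the Cartesian product over s ∈ S of its state-marginals 𝒫_s. -/

import Mathlib

open scoped BigOperators

namespace RMDP

variable {S A : Type*} [Fintype S] [Fintype A]

def IsKernel (P : S → A → S → ℝ) : Prop := ∀ s a, P s a ∈ stdSimplex ℝ S

def IsPolicy (π : S → A → ℝ) : Prop := ∀ s, π s ∈ stdSimplex ℝ A

def NextStateIndep (r : S → A → S → ℝ) : Prop :=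
  ∀ (s : S) (a : A) (s' s'' : S), r s a s' = r s a s''

noncomputable def minOver {K : Type*} (K0 : Set K) (f : K → ℝ) : ℝ := sInf (f '' K0)

noncomputable def maxOver {K : Type*} (K0 : Set K) (f : K → ℝ) : ℝ := sSup (f '' K0)

noncomputable def TpiP (π : S → A → ℝ) (r : S → A → S → ℝ) (γ : ℝ)
    (P : S → A → S → ℝ) (v : S → ℝ) : S → ℝ :=
  fun s => ∑ a, π s a * ∑ s', P s a s' * (r s a s' + γ * v s')

noncomputable def Tpi (US : Set (S → A → S → ℝ)) (π : S → A → ℝ)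
    (r : S → A → S → ℝ) (γ : ℝ) (v : S → ℝ) : S → ℝ :=
  fun s => minOver US (fun P => ∑ a, π s a * ∑ s', P s a s' * (r s a s' + γ * v s'))

noncomputable def TpiHat (US : Set (S → A → S → ℝ)) (π : S → A → ℝ)
    (r : S → A → S → ℝ) (γ : ℝ) (v : S → ℝ) : S → ℝ :=
  fun s => ∑ a, π s a * minOver US (fun P => ∑ s', P s a s' * (r s a s' + γ * v s'))

noncomputable def Topt (US : Set (S → A → S → ℝ)) (r : S → A → S → ℝ) (γ : ℝ)
    (v : S → ℝ) : S → ℝ :=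
  fun s => maxOver (stdSimplex ℝ A)
    (fun p => minOver US (fun P => ∑ a, p a * ∑ s', P s a s' * (r s a s' + γ * v s')))

def IsHPolicy (π : List (S × A) → S → A → ℝ) : Prop := ∀ h s, π h s ∈ stdSimplex ℝ A

noncomputable def expRHH (π : List (S × A) → S → A → ℝ)
    (Q : List (S × A) → S → A → S → ℝ) (r : S → A → S → ℝ) :
    ℕ → List (S × A) → S → ℝ
  | 0, h, s => ∑ a, π h s a * ∑ s', Q (h ++ [(s, a)]) s a s' * r s a s'
  | (t + 1), h, s =>
      ∑ a, π h s a * ∑ s', Q (h ++ [(s, a)]) s a s' * expRHH π Q r t (h ++ [(s, a)]) s'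

noncomputable def vHH (π : List (S × A) → S → A → ℝ)
    (Q : List (S × A) → S → A → S → ℝ) (r : S → A → S → ℝ) (γ : ℝ) (s : S) : ℝ :=
  ∑' t : ℕ, γ ^ t * expRHH π Q r t [] s

def STractable (US : Set (S → A → S → ℝ)) : Prop :=
  ∀ π : S → A → ℝ, IsPolicy π →
    ∀ (r : S → A → S → ℝ) (γ : ℝ), 0 ≤ γ → γ < 1 →
      ∀ v : (S → A → S → ℝ) → S → ℝ, (∀ P ∈ US, TpiP π r γ P (v P) = v P) →
        ∀ u : S → ℝ, Tpi US π r γ u = u →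
          ∀ μ ∈ stdSimplex ℝ S,
            minOver US (fun P => ∑ s, μ s * v P s) = ∑ s, μ s * u s

def SATractable (US : Set (S → A → S → ℝ)) : Prop :=
  ∀ π : S → A → ℝ, IsPolicy π →
    ∀ (r : S → A → S → ℝ) (γ : ℝ), 0 ≤ γ → γ < 1 →
      ∀ v : (S → A → S → ℝ) → S → ℝ, (∀ P ∈ US, TpiP π r γ P (v P) = v P) →
        ∀ uhat : S → ℝ, TpiHat US π r γ uhat = uhat →
          ∀ μ ∈ stdSimplex ℝ S,
            minOver US (fun P => ∑ s, μ s * v P s) = ∑ s, μ s * uhat s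

def WeakSTractable (US : Set (S → A → S → ℝ)) : Prop :=
  ∀ π : S → A → ℝ, IsPolicy π →
    ∀ (r : S → A → S → ℝ), NextStateIndep r → ∀ γ : ℝ, 0 ≤ γ → γ < 1 →
      ∀ v : (S → A → S → ℝ) → S → ℝ, (∀ P ∈ US, TpiP π r γ P (v P) = v P) →
        ∀ u : S → ℝ, Tpi US π r γ u = u →
          ∀ μ ∈ stdSimplex ℝ S,
            minOver US (fun P => ∑ s, μ s * v P s) = ∑ s, μ s * u s

def WeakSATractable (US : Set (S → A → S → ℝ)) : Prop :=
  ∀ π : S → A → ℝ, IsPolicy π →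
    ∀ (r : S → A → S → ℝ), NextStateIndep r → ∀ γ : ℝ, 0 ≤ γ → γ < 1 →
      ∀ v : (S → A → S → ℝ) → S → ℝ, (∀ P ∈ US, TpiP π r γ P (v P) = v P) →
        ∀ uhat : S → ℝ, TpiHat US π r γ uhat = uhat →
          ∀ μ ∈ stdSimplex ℝ S,
            minOver US (fun P => ∑ s, μ s * v P s) = ∑ s, μ s * uhat s

def SSPs (US : Set (S → A → S → ℝ)) : Prop :=
  ∀ V : S → A → S → ℝ, ∃ Pstar ∈ US, ∀ s : S, ∀ P ∈ US,
    (∑ a, ∑ s', Pstar s a s' * V s a s') ≤ ∑ a, ∑ s', P s a s' * V s a s'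

def SSPsa (US : Set (S → A → S → ℝ)) : Prop :=
  ∀ V : S → A → S → ℝ, ∃ Pstar ∈ US, ∀ (s : S) (a : A), ∀ P ∈ US,
    (∑ s', Pstar s a s' * V s a s') ≤ ∑ s', P s a s' * V s a s'

def WeakSSPs (US : Set (S → A → S → ℝ)) : Prop :=
  ∀ π : S → A → ℝ, IsPolicy π → ∀ V : S → ℝ, ∃ Pstar ∈ US, ∀ s : S, ∀ P ∈ US,
    (∑ a, π s a * ∑ s', Pstar s a s' * V s') ≤ ∑ a, π s a * ∑ s', P s a s' * V s'

def WeakSSPsa (US : Set (S → A → S → ℝ)) : Prop :=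
  ∀ V : S → ℝ, ∃ Pstar ∈ US, ∀ (s : S) (a : A), ∀ P ∈ US,
    (∑ s', Pstar s a s' * V s') ≤ ∑ s', P s a s' * V s'


open Classical in
noncomputable def eBasis {S A : Type*} (s : S) (a : A) (s' : S) : S → A → S → ℝ :=
  fun t b t' => (if t = s then (1:ℝ) else 0) * ((if b = a then (1:ℝ) else 0) *
    (if t' = s' then (1:ℝ) else 0))

lemma repr_sum {S A : Type*} [Fintype S] [Fintype A]
    (f : (S → A → S → ℝ) →L[ℝ] ℝ) (x : S → A → S → ℝ) :
    f x = ∑ s, ∑ a, ∑ s', x s a s' * f (eBasis s a s') := by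
  classical
  have hx : x = ∑ s, ∑ a, ∑ s', x s a s' • eBasis s a s' := by
    funext t b t'
    simp [eBasis, Finset.sum_apply, mul_ite, ite_mul, Finset.sum_ite_eq, Finset.sum_ite_eq']
  conv_lhs => rw [hx]
  simp [map_sum, map_smul]

theorem stmt2 {S A : Type*} [Fintype S] [Fintype A] [Nonempty S] [Nonempty A]
    (US : Set (S → A → S → ℝ)) (hne : US.Nonempty) (hker : ∀ P ∈ US, IsKernel P)
    (hcpt : IsCompact US) (hconv : Convex ℝ US) :
    SSPs US ↔
      US = {P : S → A → S → ℝ | IsKernel P ∧ ∀ s : S, ∃ Q ∈ US, Q s = P s} := by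
  classical
  constructor
  · intro hssp
    ext P
    simp only [Set.mem_setOf_eq]
    constructor
    · intro hP
      exact ⟨hker P hP, fun s => ⟨P, hP, rfl⟩⟩
    · rintro ⟨hPk, hrows⟩
      by_contra hPnot
      obtain ⟨f, u, hfu, hQ⟩ :=
        geometric_hahn_banach_point_closed hconv hcpt.isClosed hPnot
      obtain ⟨Pstar, hPs, hmin⟩ := hssp (fun s a s' => f (eBasis s a s'))
      have h1 : f Pstar ≤ f P := by
        rw [repr_sum f Pstar, repr_sum f P]
        apply Finset.sum_le_sum
        intro s _
        obtain ⟨Q, hQUS, hQs⟩ := hrows s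
        have h2 := hmin s Q hQUS
        simpa [hQs] using h2
      have h3 := hQ Pstar hPs
      linarith
  · intro hEq
    intro V
    have key : ∀ s : S, ∃ P ∈ US, ∀ Q ∈ US,
        (∑ a, ∑ s', P s a s' * V s a s') ≤ ∑ a, ∑ s', Q s a s' * V s a s' := by
      intro s
      have hc : Continuous (fun P : S → A → S → ℝ =>
          ∑ a, ∑ s', P s a s' * V s a s') := by
        apply continuous_finset_sum; intro a _
        apply continuous_finset_sum; intro s' _
        fun_prop
      obtain ⟨P, hP, hmin⟩ := hcpt.exists_isMinOn hne hc.continuousOn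
      exact ⟨P, hP, fun Q hQ => hmin hQ⟩
    choose Ps hPsUS hPsmin using key
    refine ⟨fun s => Ps s s, ?_, ?_⟩
    · rw [hEq]
      exact ⟨fun s a => hker _ (hPsUS s) s a, fun s => ⟨Ps s, hPsUS s, rfl⟩⟩
    · intro s Q hQ
      exact hPsmin s Q hQ

end RMDP
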